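/- (Theorem 1, robustness part, scalarized form.) Let φ₁, …, φₙ : ℝ → ℝ each be [0,1]-slope-restricted and let Φ : ℝⁿ → ℝⁿ be the diagonal map (Φ(v))ᵢ = φᵢ(vᵢ). Let Ψ_z ∈ ℝ^{n×n}, Ψ_u ∈ ℝ^{n×n_u}, Ψ_{g,z} ∈ ℝ^{n_g×n}, Ψ_{g,u} ∈ ℝ^{n_g×n_u}, β ∈ ℝⁿ, β_g ∈ ℝ^{n_g} define the network g(u) = Ψ_{g,z} z + Ψ_{g,u} u + β_g where z solves z = Φ(Ψ_z z + Ψ_u u + β). Let ε_{u,1}, ε_{u,2} ≥ 0, let 𝕋_z ∈ ℝ^{n×n} and 𝕋_g ∈ ℝ^{n_g×n_g} be diagonal with positive diagonal entries, let 𝕋_{u,1}, 𝕋_{u,2} ≥ 0, and let γ, γ_{u,1}, γ_{u,2} ≥ 0. Suppose that for all a₊, a₋ ∈ ℝ^{n_g}, c₊, c₋ ∈ ℝ^{n_u}, z̃ ∈ ℝⁿ, ũ ∈ ℝ^{n_u}, and t ∈ ℝ, the quadratic form E := −a₊ᵀ𝕋_g a₊ − a₋ᵀ𝕋_g a₋ +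 2(a₊ − a₋)ᵀ𝕋_g(Ψ_{g,z} z̃ + Ψ_{g,u} ũ) + t·𝟙ᵀ(a₊ + a₋) − (1/2)(𝕋_{u,2} + γ_{u,2})(‖c₊‖₂² + ‖c₋‖₂²) − t(𝕋_{u,1} + γ_{u,1})·𝟙ᵀ(c₊ + c₋) + 2 z̃ᵀ𝕋_z(Ψ_z z̃ + Ψ_u ũ − z̃) − (1/2)(𝕋_{u,2} + γ_{u,2})‖ũ‖₂² + t²(𝕋_{u,1} ε_{u,1} + 𝕋_{u,2} ε_{u,2} − γ) satisfies E ≤ 0. Then for all inputs u₁, u₂ ∈ ℝ^{n_u} with ‖u₁ − u₂‖₁ ≤ ε_{u,1} and ‖u₁ − u₂‖₂² ≤ ε_{u,2}, and all states z₁, z₂ solving the implicit equations zⱼ = Φ(Ψ_z zⱼ + Ψ_u uⱼ + β), the corresponding outputs gⱼ = Ψ_{g,z} zⱼ + Ψ_{g,u} uⱼ + β_g satisfy ‖g₁ − g₂‖₁ ≤ γ + γ_{u,1}‖u₁ − u₂‖₁ + γ_{u,2}‖u₁ − u₂‖₂². -/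

import Mathlib

open Matrix

/-- A function φ : ℝ → ℝ is [0,1]-slope-restricted if
0 ≤ (φ(s₁) − φ(s₂))/(s₁ − s₂) ≤ 1 for all s₁ ≠ s₂. -/
def SlopeRestricted01 (φ : ℝ → ℝ) : Prop :=
  ∀ s₁ s₂ : ℝ, s₁ ≠ s₂ →
    0 ≤ (φ s₁ - φ s₂) / (s₁ - s₂) ∧ (φ s₁ - φ s₂) / (s₁ - s₂) ≤ 1

lemma slope_key {φ : ℝ → ℝ} (h : SlopeRestricted01 φ) (s₁ s₂ : ℝ) :
    0 ≤ (φ s₁ - φ s₂) * ((s₁ - s₂) - (φ s₁ - φ s₂)) := by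
  rcases eq_or_ne s₁ s₂ with he | he
  · simp [he]
  · obtain ⟨h0, h1⟩ := h s₁ s₂ he
    have hd : s₁ - s₂ ≠ 0 := sub_ne_zero.mpr he
    set q := (φ s₁ - φ s₂) / (s₁ - s₂) with hq
    have hv : φ s₁ - φ s₂ = q * (s₁ - s₂) := by rw [hq, div_mul_cancel₀ _ hd]
    rw [hv]
    have : q * (s₁ - s₂) * ((s₁ - s₂) - q * (s₁ - s₂)) = q * (1 - q) * (s₁ - s₂) ^ 2 := by
      ring
    rw [this]
    exact mul_nonneg (mul_nonneg h0 (by linarith)) (sq_nonneg _)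

lemma relu_aux1 (x c : ℝ) :
    max x 0 * c * max x 0 + max (-x) 0 * c * max (-x) 0 = c * x ^ 2 := by
  rcases le_total 0 x with h | h
  · rw [max_eq_left h, max_eq_right (neg_nonpos.mpr h)]; ring
  · rw [max_eq_right h, max_eq_left (neg_nonneg.mpr h)]; ring

lemma relu_aux2 (x : ℝ) : max x 0 + max (-x) 0 = |x| := by
  rcases le_total 0 x with h | h
  · rw [max_eq_left h, max_eq_right (neg_nonpos.mpr h), abs_of_nonneg h]; ring
  · rw [max_eq_right h, max_eq_left (neg_nonneg.mpr h), abs_of_nonpos h]; ring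

lemma relu_aux3 (x : ℝ) : (max x 0) ^ 2 + (max (-x) 0) ^ 2 = x ^ 2 := by
  rcases le_total 0 x with h | h
  · rw [max_eq_left h, max_eq_right (neg_nonpos.mpr h)]; ring
  · rw [max_eq_right h, max_eq_left (neg_nonneg.mpr h)]; ring


/-- Theorem 1 of the paper, robustness part, in scalarized form: if the
quadratic form E associated with the semidefinite constraint (13) is ≤ 0 for
all arguments, then the network g satisfies the 1-norm incremental robustness
bound. -/
theorem robustness_from_scalarized_SDP (n nu ng : ℕ)
    (φ : Fin n → ℝ → ℝ) (hφ : ∀ i, SlopeRestricted01 (φ i))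
    (Φ : (Fin n → ℝ) → (Fin n → ℝ)) (hΦ : ∀ v i, Φ v i = φ i (v i))
    (Ψz : Matrix (Fin n) (Fin n) ℝ) (Ψu : Matrix (Fin n) (Fin nu) ℝ)
    (Ψgz : Matrix (Fin ng) (Fin n) ℝ) (Ψgu : Matrix (Fin ng) (Fin nu) ℝ)
    (β : Fin n → ℝ) (βg : Fin ng → ℝ)
    (εu1 εu2 : ℝ) (hε1 : 0 ≤ εu1) (hε2 : 0 ≤ εu2)
    (Tz : Fin n → ℝ) (hTz : ∀ i, 0 < Tz i)
    (Tg : Fin ng → ℝ) (hTg : ∀ i, 0 < Tg i)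
    (Tu1 Tu2 : ℝ) (hTu1 : 0 ≤ Tu1) (hTu2 : 0 ≤ Tu2)
    (γ γu1 γu2 : ℝ) (hγ : 0 ≤ γ) (hγ1 : 0 ≤ γu1) (hγ2 : 0 ≤ γu2)
    (hE : ∀ (ap am : Fin ng → ℝ) (cp cm : Fin nu → ℝ)
        (zt : Fin n → ℝ) (ut : Fin nu → ℝ) (t : ℝ),
      -(∑ i, ap i * Tg i * ap i) - (∑ i, am i * Tg i * am i)
        + 2 * (∑ i, (ap i - am i) * Tg i * ((Ψgz.mulVec zt + Ψgu.mulVec ut) i))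
        + t * (∑ i, (ap i + am i))
        - (1 / 2) * (Tu2 + γu2) * ((∑ i, (cp i) ^ 2) + (∑ i, (cm i) ^ 2))
        - t * (Tu1 + γu1) * (∑ i, (cp i + cm i))
        + 2 * (∑ i, zt i * Tz i * ((Ψz.mulVec zt + Ψu.mulVec ut - zt) i))
        - (1 / 2) * (Tu2 + γu2) * (∑ i, (ut i) ^ 2)
        + t ^ 2 * (Tu1 * εu1 + Tu2 * εu2 - γ) ≤ 0) :
    ∀ (u₁ u₂ : Fin nu → ℝ),
      (∑ i, |u₁ i - u₂ i|) ≤ εu1 →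
      (∑ i, (u₁ i - u₂ i) ^ 2) ≤ εu2 →
      ∀ (z₁ z₂ : Fin n → ℝ),
        z₁ = Φ (Ψz.mulVec z₁ + Ψu.mulVec u₁ + β) →
        z₂ = Φ (Ψz.mulVec z₂ + Ψu.mulVec u₂ + β) →
        (∑ i, |(Ψgz.mulVec z₁ + Ψgu.mulVec u₁ + βg) i
                - (Ψgz.mulVec z₂ + Ψgu.mulVec u₂ + βg) i|)
          ≤ γ + γu1 * (∑ i, |u₁ i - u₂ i|) + γu2 * (∑ i, (u₁ i - u₂ i) ^ 2) := by
  intro u₁ u₂ hu1 hu2 z₁ z₂ hz₁ hz₂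
  set ut : Fin nu → ℝ := u₁ - u₂ with hut
  set zt : Fin n → ℝ := z₁ - z₂ with hzt
  set gt : Fin ng → ℝ := Ψgz.mulVec zt + Ψgu.mulVec ut with hgt
  -- abbreviations for the relevant sums
  set S1 : ℝ := ∑ i, |gt i| with hS1
  set SG : ℝ := ∑ i, Tg i * gt i ^ 2 with hSG
  set SU1 : ℝ := ∑ i, |u₁ i - u₂ i| with hSU1
  set SU2 : ℝ := ∑ i, (u₁ i - u₂ i) ^ 2 with hSU2
  -- the goal LHS equals S1
  have hgoal : (∑ i, |(Ψgz.mulVec z₁ + Ψgu.mulVec u₁ + βg) i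
                - (Ψgz.mulVec z₂ + Ψgu.mulVec u₂ + βg) i|) = S1 := by
    rw [hS1]
    refine Finset.sum_congr rfl fun i _ => ?_
    congr 1
    simp [hgt, hzt, hut, Matrix.mulVec_sub, Pi.add_apply, Pi.sub_apply]
    ring
  rw [hgoal]
  -- instantiate the quadratic form
  have hE1 := hE (fun i => max (gt i) 0) (fun i => max (-(gt i)) 0)
    (fun i => max (u₁ i - u₂ i) 0) (fun i => max (-(u₁ i - u₂ i)) 0) zt ut 1
  simp only [one_pow, one_mul] at hE1
  -- simplify the sums in hE1
  have e1 : (∑ i, max (gt i) 0 * Tg i * max (gt i) 0)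
      + (∑ i, max (-(gt i)) 0 * Tg i * max (-(gt i)) 0) = SG := by
    rw [hSG, ← Finset.sum_add_distrib]
    exact Finset.sum_congr rfl fun i _ => relu_aux1 _ _
  have e2 : (∑ i, (max (gt i) 0 - max (-(gt i)) 0) * Tg i
      * ((Ψgz.mulVec zt + Ψgu.mulVec ut) i)) = SG := by
    rw [hSG]
    refine Finset.sum_congr rfl fun i _ => ?_
    rw [max_zero_sub_max_neg_zero_eq_self, ← hgt]
    ring
  have e3 : (∑ i, (max (gt i) 0 + max (-(gt i)) 0)) = S1 := by
    rw [hS1]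
    exact Finset.sum_congr rfl fun i _ => relu_aux2 _
  have e4 : (∑ i, (max (u₁ i - u₂ i) 0) ^ 2) + (∑ i, (max (-(u₁ i - u₂ i)) 0) ^ 2)
      = SU2 := by
    rw [hSU2, ← Finset.sum_add_distrib]
    exact Finset.sum_congr rfl fun i _ => relu_aux3 _
  have e5 : (∑ i, (max (u₁ i - u₂ i) 0 + max (-(u₁ i - u₂ i)) 0)) = SU1 := by
    rw [hSU1]
    exact Finset.sum_congr rfl fun i _ => relu_aux2 _
  have e6 : (∑ i, (ut i) ^ 2) = SU2 := by
    rw [hSU2]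
    refine Finset.sum_congr rfl fun i _ => ?_
    rw [hut]; simp [Pi.sub_apply]
  -- the slope-restriction term is nonnegative
  have e7 : 0 ≤ ∑ i, zt i * Tz i * ((Ψz.mulVec zt + Ψu.mulVec ut - zt) i) := by
    refine Finset.sum_nonneg fun i _ => ?_
    have h1 : z₁ i = φ i ((Ψz.mulVec z₁ + Ψu.mulVec u₁ + β) i) :=
      (congrFun hz₁ i).trans (hΦ _ i)
    have h2 : z₂ i = φ i ((Ψz.mulVec z₂ + Ψu.mulVec u₂ + β) i) :=
      (congrFun hz₂ i).trans (hΦ _ i)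
    have hzi : zt i = φ i ((Ψz.mulVec z₁ + Ψu.mulVec u₁ + β) i)
        - φ i ((Ψz.mulVec z₂ + Ψu.mulVec u₂ + β) i) := by
      rw [hzt, Pi.sub_apply, h1, h2]
    have hvi : (Ψz.mulVec zt + Ψu.mulVec ut) i
        = (Ψz.mulVec z₁ + Ψu.mulVec u₁ + β) i - (Ψz.mulVec z₂ + Ψu.mulVec u₂ + β) i := by
      simp [hzt, hut, Matrix.mulVec_sub, Pi.add_apply, Pi.sub_apply]
      ring
    have key := slope_key (hφ i) ((Ψz.mulVec z₁ + Ψu.mulVec u₁ + β) i)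
      ((Ψz.mulVec z₂ + Ψu.mulVec u₂ + β) i)
    rw [← hzi, ← hvi] at key  -- may fail; fallback below
    have : zt i * Tz i * ((Ψz.mulVec zt + Ψu.mulVec ut - zt) i)
        = Tz i * (zt i * ((Ψz.mulVec zt + Ψu.mulVec ut) i - zt i)) := by
      simp [Pi.sub_apply, Pi.add_apply]; ring
    rw [this]
    exact mul_nonneg (le_of_lt (hTz i)) key
  have hSGpos : 0 ≤ SG := by
    rw [hSG]
    exact Finset.sum_nonneg fun i _ => mul_nonneg (le_of_lt (hTg i)) (sq_nonneg _)
  rw [e2, e3, e4, e5, e6] at hE1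
  have m1 : Tu1 * SU1 ≤ Tu1 * εu1 := mul_le_mul_of_nonneg_left hu1 hTu1
  have m2 : Tu2 * SU2 ≤ Tu2 * εu2 := mul_le_mul_of_nonneg_left hu2 hTu2
  linarith [hE1, e1, e7, hSGpos, m1, m2]
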